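/- Closed-form optimal work allocation with cut-offs (Theorem A.2). Let N ∈ ℕ, r > 0, let a, b ∈ ℝ^N have strictly positive entries, and let 0 < ω_M < ω̄/N < ω_m. Consider the problem: minimize ∑_{k=0}^{N−1} a_k·(ω_k/b_k)^{−1/r} over vectors ω with ω_M ≤ ω_k ≤ ω_m for every k, subject to ∑_{k=0}^{N−1} ω_k = ω̄. Assume the non-degeneracy condition: there are no nonnegative integers p, q with p + q = N and p·ω_M + q·ω_m = ω̄. Then there exist integers N⊕, N⊖ ≥ 0 with N⊕ + N⊖ ≤ N−1 and a bijection ρ of {0,…,N−1} with ρ(k₁) < ρ(k₂) implying (a_{k₁}^r b_{k₁})^{−1} ≥ (a_{k₂}^r b_{k₂})^{−1}, such that, writing ⊕ = {k : ρ(k) < N⊕}, ⊖ = {k : ρ(k) > N−1−N⊖}, T = {k : N⊕ ≤ ρ(k) ≤ N−1−N⊖}, and λ̂ = (ω̄ − N⊕·ω_M − N⊖·ω_m) / ∑_{k∈T} (a_k^r b_k)^{1/(r+1)}, the vector ω* given by ω*_k = ω_M for k ∈ ⊕, ω*_k = λ̂·(a_k^r b_k)^{1/(r+1)} for k ∈ T,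 and ω*_k = ω_m for k ∈ ⊖, is an optimal solution of this problem, with λ̂ > 0. -/

import Mathlib

open Finset

lemma tangent_ineq {p x y : ℝ} (hp : 0 < p) (hx : 0 < x) (hy : 0 < y) :
    x ^ (-p) - y ^ (-p) ≤ p * x ^ (-(p+1)) * (y - x) := by
  have h1p : (0:ℝ) < 1 + p := by linarith
  have key := Real.geom_mean_le_arith_mean2_weighted
    (w₁ := 1/(1+p)) (w₂ := p/(1+p)) (p₁ := y ^ (-p)) (p₂ := x ^ (-(p+1)) * y)
    (by positivity) (by positivity) (by positivity) (by positivity) (by field_simp)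
  have lhs : (y ^ (-p)) ^ ((1:ℝ)/(1+p)) * (x ^ (-(p+1)) * y) ^ (p/(1+p)) = x ^ (-p) := by
    rw [← Real.rpow_mul hy.le, Real.mul_rpow (by positivity) hy.le,
      ← Real.rpow_mul hx.le]
    rw [show -(p+1) * (p/(1+p)) = -p by field_simp; ring]
    rw [show -p * (1/(1+p)) = -(p/(1+p)) by ring, mul_comm (x ^ (-p)), ← mul_assoc,
      ← Real.rpow_add hy, neg_add_cancel, Real.rpow_zero, one_mul]
  rw [lhs] at key
  have hxx : x ^ (-p) = x ^ (-(p+1)) * x := by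
    rw [show -p = -(p+1) + 1 by ring, Real.rpow_add hx, Real.rpow_one]
  have h2 : (1+p) * (x ^ (-(p+1)) * x) ≤ y ^ (-p) + p * (x ^ (-(p+1)) * y) := by
    have := mul_le_mul_of_nonneg_left key h1p.le
    rw [hxx] at this
    calc (1+p) * (x ^ (-(p+1)) * x)
        ≤ (1+p) * (1/(1+p) * y ^ (-p) + p/(1+p) * (x ^ (-(p+1)) * y)) := this
      _ = y ^ (-p) + p * (x ^ (-(p+1)) * y) := by field_simp
  rw [hxx]
  nlinarith [h2]

lemma mem_iff_lt_card_of_downclosed {N : ℕ} (B : Finset (Fin N))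
    (hdc : ∀ i j : Fin N, i ≤ j → j ∈ B → i ∈ B) (i : Fin N) :
    i ∈ B ↔ (i : ℕ) < B.card := by
  constructor
  · intro hi
    have hsub : Finset.Iic i ⊆ B := fun j hj => hdc j i (Finset.mem_Iic.mp hj) hi
    have := Finset.card_le_card hsub
    rw [Fin.card_Iic] at this
    omega
  · intro hlt
    by_contra hni
    have hsub : B ⊆ Finset.Iio i := by
      intro j hj
      rw [Finset.mem_Iio]
      by_contra hij
      exact hni (hdc i j (le_of_not_gt hij) hj)
    have := Finset.card_le_card hsub
    rw [Fin.card_Iio] at this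
    omega

set_option maxHeartbeats 1000000 in
/-- Closed-form optimal work allocation with cut-offs (Theorem A.2). -/
theorem closed_form_work_allocation_cutoff
    (N : ℕ) (r ωM ωm ωbar : ℝ) (hr : 0 < r)
    (a b : Fin N → ℝ) (ha : ∀ k, 0 < a k) (hb : ∀ k, 0 < b k)
    (hωM : 0 < ωM) (h1 : ωM < ωbar / N) (h2 : ωbar / N < ωm)
    (hnondeg : ¬ ∃ p q : ℕ, p + q = N ∧ (p : ℝ) * ωM + (q : ℝ) * ωm = ωbar) :
    ∃ Nplus Nminus : ℕ, Nplus + Nminus ≤ N - 1 ∧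
    ∃ ρ : Equiv.Perm (Fin N),
      (∀ k₁ k₂ : Fin N, ρ k₁ < ρ k₂ →
        (a k₂ ^ r * b k₂)⁻¹ ≤ (a k₁ ^ r * b k₁)⁻¹) ∧
      ∃ lam : ℝ,
        lam = (ωbar - (Nplus : ℝ) * ωM - (Nminus : ℝ) * ωm) /
          ∑ k ∈ univ.filter
            (fun k => Nplus ≤ (ρ k : ℕ) ∧ (ρ k : ℕ) ≤ N - 1 - Nminus),
            (a k ^ r * b k) ^ (1 / (r + 1)) ∧
        0 < lam ∧
        ∃ ωstar : Fin N → ℝ,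
          (∀ k, (ρ k : ℕ) < Nplus → ωstar k = ωM) ∧
          (∀ k, Nplus ≤ (ρ k : ℕ) → (ρ k : ℕ) ≤ N - 1 - Nminus →
            ωstar k = lam * (a k ^ r * b k) ^ (1 / (r + 1))) ∧
          (∀ k, N - 1 - Nminus < (ρ k : ℕ) → ωstar k = ωm) ∧
          -- ωstar is an optimal solution of the work-controlled problem
          (∀ k, ωM ≤ ωstar k ∧ ωstar k ≤ ωm) ∧
          (∑ k, ωstar k = ωbar) ∧
          (∀ ω : Fin N → ℝ,
            (∀ k, ωM ≤ ω k ∧ ω k ≤ ωm) →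
            (∑ k, ω k = ωbar) →
            ∑ k, a k * (ωstar k / b k) ^ (-(1 / r)) ≤
              ∑ k, a k * (ω k / b k) ^ (-(1 / r))) := by
  classical
  have hN : 0 < N := by
    by_contra h
    push_neg at h
    interval_cases N
    norm_num at h1
    linarith
  have hNR : (0:ℝ) < N := by exact_mod_cast hN
  have hωm : 0 < ωm := lt_trans (lt_trans hωM h1) h2
  have hMm : ωM < ωm := lt_trans h1 h2
  have hNωM : (N:ℝ) * ωM < ωbar := by
    rw [lt_div_iff₀ hNR] at h1; linarith
  have hNωm : ωbar < (N:ℝ) * ωm := by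
    rw [div_lt_iff₀ hNR] at h2; linarith
  set s : Fin N → ℝ := fun k => (a k ^ r * b k) ^ (1/(r+1)) with hs_def
  have hs : ∀ k, 0 < s k := fun k => by
    have h1 := ha k; have h2 := hb k
    simp only [hs_def]; positivity
  set W : ℝ → Fin N → ℝ := fun t k => max ωM (min ωm (t * s k)) with hW_def
  set g : ℝ → ℝ := fun t => ∑ k, W t k with hg_def
  have hgc : Continuous g := by
    apply continuous_finset_sum
    intro k _
    exact continuous_const.max (continuous_const.min (continuous_id.mul continuous_const))
  have hg0 : g 0 = N * ωM := by
    simp only [hg_def, hW_def, zero_mul, min_eq_right hωm.le, max_eq_left hωM.le,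
      Finset.sum_const, Finset.card_univ, Fintype.card_fin, nsmul_eq_mul]
  haveI : Nonempty (Fin N) := ⟨⟨0, hN⟩⟩
  set smin := Finset.univ.inf' Finset.univ_nonempty s with hsmin_def
  have hsminpos : 0 < smin := by
    rw [hsmin_def, Finset.lt_inf'_iff]
    exact fun k _ => hs k
  have hsmin_le : ∀ k, smin ≤ s k := fun k => Finset.inf'_le _ (Finset.mem_univ k)
  set L := ωm / smin with hL_def
  have hLpos : 0 < L := div_pos hωm hsminpos
  have hgL : g L = N * ωm := by
    have hWL : ∀ k : Fin N, W L k = ωm := by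
      intro k
      have h1 : ωm ≤ L * s k := by
        rw [hL_def, div_mul_eq_mul_div, le_div_iff₀ hsminpos]
        exact mul_le_mul_of_nonneg_left (hsmin_le k) hωm.le
      simp only [hW_def, min_eq_left h1, max_eq_right hMm.le]
    simp only [hg_def, hWL, Finset.sum_const, Finset.card_univ, Fintype.card_fin, nsmul_eq_mul]
  obtain ⟨lam, hlamIcc, hglam⟩ : ∃ lam ∈ Set.Icc (0:ℝ) L, g lam = ωbar := by
    have him := intermediate_value_Icc hLpos.le hgc.continuousOn
    have hmem : ωbar ∈ Set.Icc (g 0) (g L) := by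
      rw [hg0, hgL]; exact ⟨hNωM.le, hNωm.le⟩
    obtain ⟨lam, hmem', heq⟩ := him hmem
    exact ⟨lam, hmem', heq⟩
  have hlampos : 0 < lam := by
    rcases eq_or_lt_of_le hlamIcc.1 with h | h
    · exfalso; rw [← h, hg0] at hglam; linarith
    · exact h
  set A := Finset.univ.filter (fun k => lam * s k < ωM) with hA_def
  set C := Finset.univ.filter (fun k => ωm < lam * s k) with hC_def
  set T := Finset.univ.filter (fun k => ωM ≤ lam * s k ∧ lam * s k ≤ ωm) with hT_def
  set ωstar : Fin N → ℝ := W lam with hωstar_def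
  have hwA : ∀ k ∈ A, ωstar k = ωM := by
    intro k hk
    rw [hA_def, Finset.mem_filter] at hk
    simp only [hωstar_def, hW_def]
    rw [min_eq_right (hk.2.trans hMm).le, max_eq_left hk.2.le]
  have hwC : ∀ k ∈ C, ωstar k = ωm := by
    intro k hk
    rw [hC_def, Finset.mem_filter] at hk
    simp only [hωstar_def, hW_def]
    rw [min_eq_left hk.2.le, max_eq_right hMm.le]
  have hwT : ∀ k ∈ T, ωstar k = lam * s k := by
    intro k hk
    rw [hT_def, Finset.mem_filter] at hk
    simp only [hωstar_def, hW_def]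
    rw [min_eq_right hk.2.2, max_eq_right hk.2.1]
  have hwmem : ∀ k, ωM ≤ ωstar k ∧ ωstar k ≤ ωm := by
    intro k
    exact ⟨le_max_left _ _, max_le hMm.le (min_le_left _ _)⟩
  have hwpos : ∀ k, 0 < ωstar k := fun k => lt_of_lt_of_le hωM (hwmem k).1
  have hwsum : ∑ k, ωstar k = ωbar := hglam
  have hdAC : Disjoint A C := by
    rw [Finset.disjoint_left]
    intro k hkA hkC
    rw [hA_def, Finset.mem_filter] at hkA
    rw [hC_def, Finset.mem_filter] at hkC
    linarith [hkA.2, hkC.2]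
  have hdAT : Disjoint A T := by
    rw [Finset.disjoint_left]
    intro k hkA hkT
    rw [hA_def, Finset.mem_filter] at hkA
    rw [hT_def, Finset.mem_filter] at hkT
    linarith [hkA.2, hkT.2.1]
  have hdCT : Disjoint C T := by
    rw [Finset.disjoint_left]
    intro k hkC hkT
    rw [hC_def, Finset.mem_filter] at hkC
    rw [hT_def, Finset.mem_filter] at hkT
    linarith [hkC.2, hkT.2.2]
  have hd2 : Disjoint (A ∪ C) T := Finset.disjoint_union_left.mpr ⟨hdAT, hdCT⟩
  have hunion : A ∪ C ∪ T = Finset.univ := by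
    ext k
    simp only [Finset.mem_union, hA_def, hC_def, hT_def, Finset.mem_filter,
      Finset.mem_univ, true_and, iff_true]
    rcases lt_or_ge (lam * s k) ωM with h | h
    · exact Or.inl (Or.inl h)
    · rcases le_or_gt (lam * s k) ωm with h' | h'
      · exact Or.inr ⟨h, h'⟩
      · exact Or.inl (Or.inr h')
  have hcards : A.card + C.card + T.card = N := by
    have := Finset.card_union_of_disjoint hd2
    rw [hunion] at this
    rw [Finset.card_union_of_disjoint hdAC] at this
    simp only [Finset.card_univ, Fintype.card_fin] at this
    omega
  have hsum_split : ωbar = A.card * ωM + C.card * ωm + lam * ∑ k ∈ T, s k := by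
    rw [← hwsum, ← hunion, Finset.sum_union hd2, Finset.sum_union hdAC,
      Finset.sum_congr rfl hwA, Finset.sum_congr rfl hwC, Finset.sum_congr rfl hwT,
      Finset.sum_const, Finset.sum_const, nsmul_eq_mul, nsmul_eq_mul, ← Finset.mul_sum]
  have hTne : T.Nonempty := by
    rw [Finset.nonempty_iff_ne_empty]
    intro hT0
    apply hnondeg
    refine ⟨A.card, C.card, ?_, ?_⟩
    · rw [hT0] at hcards; simpa using hcards
    · rw [hT0] at hsum_split
      simp only [Finset.sum_empty, mul_zero, add_zero] at hsum_split
      linarith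
  have hTcard : 0 < T.card := Finset.card_pos.mpr hTne
  have hle : A.card + C.card ≤ N - 1 := by omega
  set S := ∑ k ∈ T, s k with hS_def
  have hSpos : 0 < S := Finset.sum_pos (fun k _ => hs k) hTne
  -- sorting permutation
  set σ := Tuple.sort s with hσ_def
  set ρ := σ⁻¹ with hρ_def
  have hmono : Monotone (s ∘ σ) := Tuple.monotone_sort s
  have hσρ : ∀ k, σ (ρ k) = k := fun k => Equiv.apply_symm_apply σ k
  have hAiff : ∀ k, ((ρ k : ℕ) < A.card) ↔ k ∈ A := by
    set B := Finset.univ.filter (fun i => σ i ∈ A) with hB_def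
    have hBcard : B.card = A.card := by
      apply Finset.card_bij (fun i _ => σ i)
      · intro i hi; rw [hB_def, Finset.mem_filter] at hi; exact hi.2
      · intro i _ j _ hij; exact σ.injective hij
      · intro k hk
        refine ⟨ρ k, ?_, (hσρ k)⟩
        rw [hB_def, Finset.mem_filter]
        exact ⟨Finset.mem_univ _, by rw [hσρ]; exact hk⟩
    have hdc : ∀ i j : Fin N, i ≤ j → j ∈ B → i ∈ B := by
      intro i j hij hj
      rw [hB_def, Finset.mem_filter] at hj ⊢
      refine ⟨Finset.mem_univ _, ?_⟩
      have hj2 := hj.2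
      rw [hA_def, Finset.mem_filter] at hj2 ⊢
      refine ⟨Finset.mem_univ _, ?_⟩
      have hss : s (σ i) ≤ s (σ j) := hmono hij
      have h3 := hj2.2
      nlinarith
    intro k
    rw [← hBcard, ← mem_iff_lt_card_of_downclosed B hdc (ρ k), hB_def, Finset.mem_filter, hσρ k]
    simp
  have hCiff : ∀ k, (N - C.card ≤ (ρ k : ℕ)) ↔ k ∈ C := by
    set B := Finset.univ.filter (fun i => σ i ∉ C) with hB_def
    have hCcard : (Finset.univ.filter (fun i => σ i ∈ C)).card = C.card := by
      apply Finset.card_bij (fun i _ => σ i)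
      · intro i hi; rw [Finset.mem_filter] at hi; exact hi.2
      · intro i _ j _ hij; exact σ.injective hij
      · intro k hk
        refine ⟨ρ k, ?_, (hσρ k)⟩
        rw [Finset.mem_filter]
        exact ⟨Finset.mem_univ _, by rw [hσρ]; exact hk⟩
    have hBcard : B.card = N - C.card := by
      have h := Finset.card_filter_add_card_filter_not
        (s := (Finset.univ : Finset (Fin N))) (p := fun i => σ i ∈ C)
      simp only [Finset.card_univ, Fintype.card_fin] at h
      rw [hCcard] at h
      rw [hB_def]
      omega
    have hdc : ∀ i j : Fin N, i ≤ j → j ∈ B → i ∈ B := by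
      intro i j hij hj
      rw [hB_def, Finset.mem_filter] at hj ⊢
      refine ⟨Finset.mem_univ _, ?_⟩
      have hj2 := hj.2
      intro hiC
      apply hj2
      rw [hC_def, Finset.mem_filter] at hiC ⊢
      refine ⟨Finset.mem_univ _, ?_⟩
      have hss : s (σ i) ≤ s (σ j) := hmono hij
      have h3 := hiC.2
      nlinarith
    intro k
    have hmem := mem_iff_lt_card_of_downclosed B hdc (ρ k)
    rw [hBcard, hB_def, Finset.mem_filter, hσρ k] at hmem
    simp only [Finset.mem_univ, true_and] at hmem
    have hρlt : ((ρ k) : ℕ) < N := (ρ k).isLt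
    constructor
    · intro h
      by_contra hc
      have := hmem.mp hc
      omega
    · intro h
      by_contra hc
      push_neg at hc
      exact hmem.mpr (by omega) h
  have hCle : C.card ≤ N - 1 := by omega
  have hTiff : ∀ k : Fin N,
      (A.card ≤ (ρ k : ℕ) ∧ (ρ k : ℕ) ≤ N - 1 - C.card) ↔ k ∈ T := by
    intro k
    have hρlt : ((ρ k) : ℕ) < N := (ρ k).isLt
    have hA' := hAiff k
    have hC' := hCiff k
    rw [hA_def, Finset.mem_filter] at hA'
    rw [hC_def, Finset.mem_filter] at hC'
    simp only [Finset.mem_univ, true_and] at hA' hC'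
    rw [hT_def, Finset.mem_filter]
    simp only [Finset.mem_univ, true_and]
    constructor
    · rintro ⟨hl, hr⟩
      constructor
      · have : ¬ ((ρ k : ℕ) < A.card) := by omega
        rw [hA'] at this
        linarith [not_lt.mp this]
      · have : ¬ (N - C.card ≤ (ρ k : ℕ)) := by omega
        rw [hC'] at this
        linarith [not_lt.mp this]
    · rintro ⟨hl, hr⟩
      have h1 : ¬ ((ρ k : ℕ) < A.card) := by
        rw [hA']; linarith
      have h2 : ¬ (N - C.card ≤ (ρ k : ℕ)) := by
        rw [hC']; linarith
      omega
  have hfilterT : Finset.univ.filter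
      (fun k => A.card ≤ (ρ k : ℕ) ∧ (ρ k : ℕ) ≤ N - 1 - C.card) = T := by
    ext k
    rw [Finset.mem_filter]
    simp only [Finset.mem_univ, true_and]
    exact hTiff k
  have hlam_formula : lam = (ωbar - (A.card : ℝ) * ωM - (C.card : ℝ) * ωm) / S := by
    rw [eq_div_iff (ne_of_gt hSpos)]
    linarith [hsum_split]
  refine ⟨A.card, C.card, hle, ρ, ?_, lam, ?_, hlampos, ωstar, ?_, ?_, ?_, hwmem, hwsum, ?_⟩
  · -- sortedness
    intro k₁ k₂ hlt
    have hss : s k₁ ≤ s k₂ := by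
      have hm := hmono (le_of_lt hlt)
      rwa [Function.comp_apply, Function.comp_apply, hσρ, hσρ] at hm
    have hpos1 : (0:ℝ) < a k₁ ^ r * b k₁ := by
      have := ha k₁; have := hb k₁; positivity
    have hpos2 : (0:ℝ) < a k₂ ^ r * b k₂ := by
      have := ha k₂; have := hb k₂; positivity
    have hx : a k₁ ^ r * b k₁ ≤ a k₂ ^ r * b k₂ := by
      have hrp : (0:ℝ) < 1/(r+1) := by positivity
      simp only [hs_def] at hss
      exact (Real.rpow_le_rpow_iff hpos1.le hpos2.le hrp).mp hss
    exact inv_anti₀ hpos1 hx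
  · -- lam formula
    rw [hfilterT]
    exact hlam_formula
  · -- plus set
    intro k hk
    exact hwA k ((hAiff k).mp hk)
  · -- middle set
    intro k hk1 hk2
    exact hwT k ((hTiff k).mp ⟨hk1, hk2⟩)
  · -- minus set
    intro k hk
    have : N - C.card ≤ (ρ k : ℕ) := by omega
    exact hwC k ((hCiff k).mp this)
  · -- optimality
    intro ω hωb hωsum
    have hp : (0:ℝ) < 1/r := by positivity
    set c : Fin N → ℝ := fun k => a k * b k ^ (1/r) with hc_def
    have hc_pos : ∀ k, 0 < c k := fun k => by
      have := ha k; have := hb k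
      simp only [hc_def]; positivity
    have hobj : ∀ (v : Fin N → ℝ), (∀ k, 0 < v k) →
        ∀ k, a k * (v k / b k) ^ (-(1/r)) = c k * (v k) ^ (-(1/r)) := by
      intro v hv k
      simp only [hc_def]
      rw [Real.div_rpow (hv k).le (hb k).le, Real.rpow_neg (hb k).le, div_eq_mul_inv, inv_inv]
      ring
    set μ := (1/r) * lam ^ (-(1/r+1)) with hμ_def
    have hsc : ∀ k, (s k) ^ (1/r + 1) = c k := by
      intro k
      have hak := ha k
      have hbk := hb k
      have hab : (0:ℝ) < a k ^ r * b k := by positivity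
      simp only [hs_def, hc_def]
      rw [← Real.rpow_mul hab.le]
      rw [show (1/(r+1)) * (1/r + 1) = 1/r by field_simp; ring]
      rw [Real.mul_rpow (by positivity) hbk.le, ← Real.rpow_mul hak.le,
        mul_one_div, div_self hr.ne', Real.rpow_one]
    have hmono_rpow : ∀ u v : ℝ, 0 < u → u ≤ v → v ^ (-(1/r+1)) ≤ u ^ (-(1/r+1)) := by
      intro u v hu huv
      exact Real.rpow_le_rpow_of_nonpos hu huv (by linarith)
    have hDlam : ∀ k, (1/r) * c k * (lam * s k) ^ (-(1/r+1)) = μ := by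
      intro k
      have hck : c k ≠ 0 := (hc_pos k).ne'
      rw [Real.mul_rpow hlampos.le (hs k).le, Real.rpow_neg (hs k).le, hsc k, hμ_def]
      generalize lam ^ (-(1/r+1)) = X
      field_simp
    have hkey : ∀ k, c k * (ωstar k) ^ (-(1/r)) - c k * (ω k) ^ (-(1/r)) ≤
        μ * (ω k - ωstar k) := by
      intro k
      obtain ⟨hy1, hy2⟩ := hωb k
      have hypos : 0 < ω k := lt_of_lt_of_le hωM hy1
      have hxpos : 0 < ωstar k := hwpos k
      have htan := tangent_ineq hp hxpos hypos
      have hstep1 : c k * (ωstar k) ^ (-(1/r)) - c k * (ω k) ^ (-(1/r)) ≤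
          c k * ((1/r) * (ωstar k) ^ (-(1/r+1)) * (ω k - ωstar k)) := by
        calc c k * (ωstar k) ^ (-(1/r)) - c k * (ω k) ^ (-(1/r))
            = c k * ((ωstar k) ^ (-(1/r)) - (ω k) ^ (-(1/r))) := by ring
          _ ≤ _ := mul_le_mul_of_nonneg_left htan (hc_pos k).le
      have hls_pos : 0 < lam * s k := mul_pos hlampos (hs k)
      have hstep2 : (1/r) * c k * (ωstar k) ^ (-(1/r+1)) * (ω k - ωstar k) ≤
          μ * (ω k - ωstar k) := by
        rcases lt_or_ge (lam * s k) ωM with hA1 | hA2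
        · -- lower cutoff
          have hx_eq : ωstar k = ωM :=
            hwA k (by rw [hA_def, Finset.mem_filter]; exact ⟨Finset.mem_univ _, hA1⟩)
          have hDle : (1/r) * c k * (ωstar k) ^ (-(1/r+1)) ≤ μ := by
            rw [← hDlam k]
            have := hmono_rpow (lam * s k) (ωstar k) hls_pos (by rw [hx_eq]; linarith)
            have hcp := (hc_pos k).le
            exact mul_le_mul_of_nonneg_left this (mul_nonneg (by positivity) hcp)
          have hsign : 0 ≤ ω k - ωstar k := by rw [hx_eq]; linarith
          exact mul_le_mul_of_nonneg_right hDle hsign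
        · rcases le_or_gt (lam * s k) ωm with hC2 | hC1
          · -- interior
            have hx_eq : ωstar k = lam * s k :=
              hwT k (by rw [hT_def, Finset.mem_filter]; exact ⟨Finset.mem_univ _, hA2, hC2⟩)
            rw [hx_eq, hDlam k]
          · -- upper cutoff
            have hx_eq : ωstar k = ωm :=
              hwC k (by rw [hC_def, Finset.mem_filter]; exact ⟨Finset.mem_univ _, hC1⟩)
            have hDge : μ ≤ (1/r) * c k * (ωstar k) ^ (-(1/r+1)) := by
              rw [← hDlam k]
              have := hmono_rpow (ωstar k) (lam * s k) hxpos (by rw [hx_eq]; linarith)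
              have hcp := (hc_pos k).le
              exact mul_le_mul_of_nonneg_left this (mul_nonneg (by positivity) hcp)
            have hsign : ω k - ωstar k ≤ 0 := by rw [hx_eq]; linarith
            exact mul_le_mul_of_nonpos_right hDge hsign
      calc c k * (ωstar k) ^ (-(1/r)) - c k * (ω k) ^ (-(1/r))
          ≤ c k * ((1/r) * (ωstar k) ^ (-(1/r+1)) * (ω k - ωstar k)) := hstep1
        _ = (1/r) * c k * (ωstar k) ^ (-(1/r+1)) * (ω k - ωstar k) := by ring
        _ ≤ μ * (ω k - ωstar k) := hstep2
    have hsum_ineq : ∑ k, (c k * (ωstar k) ^ (-(1/r)) - c k * (ω k) ^ (-(1/r))) ≤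
        ∑ k, μ * (ω k - ωstar k) := Finset.sum_le_sum (fun k _ => hkey k)
    have hzero : ∑ k, μ * (ω k - ωstar k) = 0 := by
      rw [← Finset.mul_sum, Finset.sum_sub_distrib, hωsum, hwsum, sub_self, mul_zero]
    rw [Finset.sum_sub_distrib] at hsum_ineq
    have ho1 : ∑ k, a k * (ωstar k / b k) ^ (-(1/r)) = ∑ k, c k * (ωstar k) ^ (-(1/r)) :=
      Finset.sum_congr rfl (fun k _ => hobj ωstar hwpos k)
    have ho2 : ∑ k, a k * (ω k / b k) ^ (-(1/r)) = ∑ k, c k * (ω k) ^ (-(1/r)) :=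
      Finset.sum_congr rfl (fun k _ => hobj ω (fun k => lt_of_lt_of_le hωM (hωb k).1) k)
    rw [ho1, ho2]
    linarith [hsum_ineq, hzero]
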